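/- For every n ≥ 2, the graph on all permutations of {1,...,n}, with edges between permutations differing by a single adjacent transposition, has a Hamiltonian cycle (for n ≥ 3) and a Hamiltonian path (for all n ≥ 2). -/

import Mathlib

/-- The graph on all permutations of `{1,…,n}`, with edges between permutations
differing by a single adjacent transposition (the skeleton of the permutahedron). -/
def permGraph (n : ℕ) : SimpleGraph (Equiv.Perm (Fin n)) :=
  SimpleGraph.fromRel fun π σ => ∃ (k : ℕ) (hk : k + 1 < n),
    σ = π * Equiv.swap (⟨k, Nat.lt_of_succ_lt hk⟩ : Fin n) ⟨k + 1, hk⟩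

namespace SJT

open Equiv List

/-- The `k`-th adjacent transposition of `Fin m` (`1` if out of range). -/
def ss (m k : ℕ) : Equiv.Perm (Fin m) :=
  if h : k + 1 < m then Equiv.swap ⟨k, Nat.lt_of_succ_lt h⟩ ⟨k + 1, h⟩ else 1

lemma ss_def {m k : ℕ} (h : k + 1 < m) :
    ss m k = Equiv.swap ⟨k, Nat.lt_of_succ_lt h⟩ ⟨k + 1, h⟩ := by simp [ss, h]

lemma ss_ne_one {m k : ℕ} (h : k + 1 < m) : ss m k ≠ 1 := by
  rw [ss_def h]
  simp only [ne_eq, Equiv.swap_eq_one_iff]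
  intro hh
  have := congrArg Fin.val hh
  simp at this

lemma permGraph_adj_mul {m k : ℕ} (h : k + 1 < m) (π : Equiv.Perm (Fin m)) :
    (permGraph m).Adj π (π * ss m k) := by
  refine ⟨?_, Or.inl ⟨k, h, by rw [ss_def h]⟩⟩
  intro hh
  exact ss_ne_one h (by
    have := congrArg (fun x => π⁻¹ * x) hh
    simpa using this.symm)

lemma permGraph_adj_mul' {m k : ℕ} (h : k + 1 < m) (π : Equiv.Perm (Fin m)) :
    (permGraph m).Adj (π * ss m k) π := ((permGraph m).adj_symm (permGraph_adj_mul h π))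

variable {n : ℕ}

/-- Extend a permutation of `Fin n` to `Fin (n+1)` fixing the last point. -/
def EE (π : Equiv.Perm (Fin n)) : Equiv.Perm (Fin (n + 1)) where
  toFun := Fin.lastCases (Fin.last n) (fun i => (π i).castSucc)
  invFun := Fin.lastCases (Fin.last n) (fun i => (π.symm i).castSucc)
  left_inv := by
    intro i
    induction i using Fin.lastCases with
    | last => simp
    | cast i => simp
  right_inv := by
    intro i
    induction i using Fin.lastCases with
    | last => simp
    | cast i => simp

@[simp] lemma EE_castSucc (π : Equiv.Perm (Fin n)) (i : Fin n) :
    EE π i.castSucc = (π i).castSucc := by simp [EE]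

@[simp] lemma EE_last (π : Equiv.Perm (Fin n)) : EE π (Fin.last n) = Fin.last n := by simp [EE]

@[simp] lemma EE_one : EE (1 : Equiv.Perm (Fin n)) = 1 := by
  ext i
  induction i using Fin.lastCases with
  | last => simp
  | cast i => simp

lemma EE_mul (π σ : Equiv.Perm (Fin n)) : EE (π * σ) = EE π * EE σ := by
  ext i
  induction i using Fin.lastCases with
  | last => simp
  | cast i => simp [Equiv.Perm.mul_apply]

lemma EE_inj : Function.Injective (EE (n := n)) := by
  intro π σ h
  ext i
  have := congrArg (fun f => f i.castSucc) h
  simpa using congrArg Fin.val this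

lemma EE_swap (a b : Fin n) :
    EE (Equiv.swap a b) = Equiv.swap a.castSucc b.castSucc := by
  ext i
  induction i using Fin.lastCases with
  | last =>
    rw [EE_last, Equiv.swap_apply_of_ne_of_ne (Fin.castSucc_lt_last a).ne'
      (Fin.castSucc_lt_last b).ne']
  | cast i =>
    rw [EE_castSucc]
    rcases eq_or_ne i a with rfl | ha
    · rw [Equiv.swap_apply_left, Equiv.swap_apply_left]
    rcases eq_or_ne i b with rfl | hb
    · rw [Equiv.swap_apply_right, Equiv.swap_apply_right]
    · rw [Equiv.swap_apply_of_ne_of_ne ha hb, Equiv.swap_apply_of_ne_of_ne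
        (fun hh => ha (Fin.castSucc_injective _ hh))
        (fun hh => hb (Fin.castSucc_injective _ hh))]

lemma EE_ss {k : ℕ} (hk : k + 1 < n) : EE (ss n k) = ss (n + 1) k := by
  rw [ss_def hk, ss_def (show k + 1 < n + 1 by omega), EE_swap]
  congr 1 <;> apply Fin.ext <;> simp

/-- The permutation moving the last point from position `n` down to position `n - j`. -/
def TT (n : ℕ) : ℕ → Equiv.Perm (Fin (n + 1))
  | 0 => 1
  | j + 1 => TT n j * ss (n + 1) (n - 1 - j)

lemma TT_apply : ∀ (j : ℕ), j ≤ n → ∀ p : Fin (n + 1),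
    ((TT n j) p : ℕ) =
      if (p : ℕ) < n - j then (p : ℕ) else if (p : ℕ) = n - j then n else (p : ℕ) - 1 := by
  intro j
  induction j with
  | zero =>
    intro _ p
    have := p.isLt
    simp only [TT, Equiv.Perm.one_apply]
    split_ifs <;> omega
  | succ j ih =>
    intro hj p
    have ha : (n - 1 - j) + 1 < n + 1 := by omega
    have hp := p.isLt
    show ((TT n j) (ss (n + 1) (n - 1 - j) p) : ℕ) = _
    rw [ss_def ha]
    by_cases h1 : p = ⟨n - 1 - j, Nat.lt_of_succ_lt ha⟩
    · rw [h1, Equiv.swap_apply_left, ih (by omega)]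
      simp only [Fin.val_mk]
      split_ifs <;> omega
    by_cases h2 : p = ⟨n - 1 - j + 1, ha⟩
    · rw [h2, Equiv.swap_apply_right, ih (by omega)]
      simp only [Fin.val_mk]
      split_ifs <;> omega
    · rw [Equiv.swap_apply_of_ne_of_ne h1 h2, ih (by omega)]
      have hv1 : (p : ℕ) ≠ n - 1 - j := fun hh => h1 (Fin.ext hh)
      have hv2 : (p : ℕ) ≠ n - 1 - j + 1 := fun hh => h2 (Fin.ext hh)
      split_ifs <;> omega

lemma TT_inv_last (j : ℕ) (hj : j ≤ n) :
    (TT n j)⁻¹ (Fin.last n) = ⟨n - j, by omega⟩ := by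
  rw [Equiv.Perm.inv_eq_iff_eq]
  apply Fin.ext
  rw [TT_apply j hj]
  simp only [Fin.val_mk, Fin.val_last]
  split_ifs <;> omega

lemma ss_mul_TT {k : ℕ} (hk : k + 1 < n) :
    ss (n + 1) k * TT n n = TT n n * ss (n + 1) (k + 1) := by
  have h1 : k + 1 < n + 1 := by omega
  have h2 : k + 2 < n + 1 := by omega
  have e1 : TT n n ⟨k + 1, h1⟩ = ⟨k, by omega⟩ := by
    apply Fin.ext
    rw [TT_apply n le_rfl]
    simp only [Fin.val_mk]
    split_ifs <;> omega
  have e2 : TT n n ⟨k + 2, h2⟩ = ⟨k + 1, h1⟩ := by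
    apply Fin.ext
    rw [TT_apply n le_rfl]
    simp only [Fin.val_mk]
    split_ifs <;> omega
  rw [ss_def h1, ss_def h2]
  rw [← e1, ← e2, Equiv.swap_apply_apply]
  group

lemma uniq {π π' : Equiv.Perm (Fin n)} {j j' : ℕ} (hj : j ≤ n) (hj' : j' ≤ n)
    (h : EE π * TT n j = EE π' * TT n j') : π = π' ∧ j = j' := by
  have hlast : ∀ (σ : Equiv.Perm (Fin n)) (i : ℕ) (hi : i ≤ n),
      (EE σ * TT n i)⁻¹ (Fin.last n) = ⟨n - i, by omega⟩ := by
    intro σ i hi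
    rw [mul_inv_rev, Equiv.Perm.mul_apply]
    have : (EE σ)⁻¹ (Fin.last n) = Fin.last n := by
      rw [Equiv.Perm.inv_eq_iff_eq, EE_last]
    rw [this, TT_inv_last i hi]
  have h2 : (⟨n - j, by omega⟩ : Fin (n + 1)) = ⟨n - j', by omega⟩ := by
    rw [← hlast π j hj, ← hlast π' j' hj', h]
  have hjj : j = j' := by
    have := congrArg Fin.val h2
    simp only [Fin.val_mk] at this
    omega
  subst hjj
  exact ⟨EE_inj (mul_right_cancel h), rfl⟩

/-- One block of SJT: the `n+1` insertions of the largest element into `π`. -/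
def baseB (π : Equiv.Perm (Fin n)) : List (Equiv.Perm (Fin (n + 1))) :=
  (List.range (n + 1)).map fun j => EE π * TT n j

def blockOf (π : Equiv.Perm (Fin n)) (b : Bool) : List (Equiv.Perm (Fin (n + 1))) :=
  if b then baseB π else (baseB π).reverse

lemma baseB_head? (π : Equiv.Perm (Fin n)) :
    (baseB π).head? = some (EE π * TT n 0) := by
  rw [baseB, List.range_succ_eq_map]
  simp

lemma baseB_getLast? (π : Equiv.Perm (Fin n)) :
    (baseB π).getLast? = some (EE π * TT n n) := by
  rw [baseB, List.range_succ, List.map_append]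
  simp

lemma blockOf_head? (π : Equiv.Perm (Fin n)) (b : Bool) :
    (blockOf π b).head? = some (EE π * TT n (if b then 0 else n)) := by
  cases b
  · rw [blockOf, if_neg (by simp), List.head?_reverse, baseB_getLast?, if_neg (by simp)]
  · rw [blockOf, if_pos rfl, baseB_head?, if_pos rfl]

lemma blockOf_getLast? (π : Equiv.Perm (Fin n)) (b : Bool) :
    (blockOf π b).getLast? = some (EE π * TT n (if b then n else 0)) := by
  cases b
  · rw [blockOf, if_neg (by simp), List.getLast?_reverse, baseB_head?, if_neg (by simp)]
  · rw [blockOf, if_pos rfl, baseB_getLast?, if_pos rfl]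

lemma mem_blockOf {σ : Equiv.Perm (Fin (n + 1))} {π : Equiv.Perm (Fin n)} {b : Bool}
    (h : σ ∈ blockOf π b) : ∃ j ≤ n, σ = EE π * TT n j := by
  have : σ ∈ baseB π := by
    cases b
    · rw [blockOf, if_neg (by simp), List.mem_reverse] at h; exact h
    · rwa [blockOf, if_pos rfl] at h
  rw [baseB, List.mem_map] at this
  obtain ⟨j, hj, rfl⟩ := this
  rw [List.mem_range] at hj
  exact ⟨j, by omega, rfl⟩

lemma blockOf_ne_nil (π : Equiv.Perm (Fin n)) (b : Bool) : blockOf π b ≠ [] := by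
  cases b <;> simp [blockOf, baseB]

lemma blockOf_length (π : Equiv.Perm (Fin n)) (b : Bool) :
    (blockOf π b).length = n + 1 := by
  cases b <;> simp [blockOf, baseB]

lemma blockOf_nodup (π : Equiv.Perm (Fin n)) (b : Bool) : (blockOf π b).Nodup := by
  have : (baseB π).Nodup := by
    refine List.Nodup.map_on ?_ List.nodup_range
    intro x hx y hy hxy
    rw [List.mem_range] at hx hy
    exact (uniq (by omega) (by omega) hxy).2
  cases b
  · rw [blockOf, if_neg (by simp)]; exact List.nodup_reverse.mpr this
  · rwa [blockOf, if_pos rfl]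

lemma blockOf_chain' (π : Equiv.Perm (Fin n)) (b : Bool) :
    (blockOf π b).Chain' (permGraph (n + 1)).Adj := by
  have hbase : (baseB π).Chain' (permGraph (n + 1)).Adj := by
    unfold List.Chain'
    rw [baseB, List.isChain_map, List.isChain_range_succ]
    intro m hm
    have hs : (n - 1 - m) + 1 < n + 1 := by omega
    have : TT n (m + 1) = TT n m * ss (n + 1) (n - 1 - m) := rfl
    rw [this, ← mul_assoc]
    exact permGraph_adj_mul hs _
  cases b
  · unfold List.Chain' at hbase ⊢
    rw [blockOf, if_neg (by simp), List.isChain_reverse]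
    exact hbase.imp fun a b h => h.symm
  · rwa [blockOf, if_pos rfl]

/-- The SJT list for `n+1` built from a list of permutations of `Fin n`,
with alternating sweep directions. -/
def ff (n : ℕ) : List (Equiv.Perm (Fin n)) → Bool → List (Equiv.Perm (Fin (n + 1)))
  | [], _ => []
  | π :: t, b => blockOf π b ++ ff n t (!b)

lemma mem_ff {σ : Equiv.Perm (Fin (n + 1))} :
    ∀ {L : List (Equiv.Perm (Fin n))} {b : Bool}, σ ∈ ff n L b →
      ∃ π ∈ L, ∃ j ≤ n, σ = EE π * TT n j := by
  intro L
  induction L with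
  | nil => intro b h; simp [ff] at h
  | cons π t ih =>
    intro b h
    rw [ff, List.mem_append] at h
    rcases h with h | h
    · obtain ⟨j, hj, rfl⟩ := mem_blockOf h
      exact ⟨π, by simp, j, hj, rfl⟩
    · obtain ⟨π', hπ', j, hj, rfl⟩ := ih h
      exact ⟨π', by simp [hπ'], j, hj, rfl⟩

lemma ff_length : ∀ (L : List (Equiv.Perm (Fin n))) (b : Bool),
    (ff n L b).length = L.length * (n + 1) := by
  intro L
  induction L with
  | nil => intro b; simp [ff]
  | cons π t ih =>
    intro b
    rw [ff, List.length_append, blockOf_length, ih]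
    simp [Nat.succ_mul, Nat.add_comm]

lemma ff_nodup : ∀ {L : List (Equiv.Perm (Fin n))} {b : Bool}, L.Nodup →
    (ff n L b).Nodup := by
  intro L
  induction L with
  | nil => intro b _; simp [ff]
  | cons π t ih =>
    intro b hL
    rw [List.nodup_cons] at hL
    rw [ff]
    refine List.Nodup.append (blockOf_nodup π b) (ih hL.2) ?_
    intro σ h1 h2
    obtain ⟨j, hj, rfl⟩ := mem_blockOf h1
    obtain ⟨π', hπ', j', hj', heq⟩ := mem_ff h2
    obtain ⟨rfl, rfl⟩ := uniq hj hj' heq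
    exact hL.1 hπ'


lemma ff_ne_nil (π : Equiv.Perm (Fin n)) (t : List (Equiv.Perm (Fin n))) (b : Bool) :
    ff n (π :: t) b ≠ [] := by
  rw [ff]
  simp [blockOf_ne_nil]

lemma ff_head? (π : Equiv.Perm (Fin n)) (t : List (Equiv.Perm (Fin n))) (b : Bool) :
    (ff n (π :: t) b).head? = some (EE π * TT n (if b then 0 else n)) := by
  rw [ff, List.head?_append_of_ne_nil _ (blockOf_ne_nil π b), blockOf_head?]

lemma ff_getLast? : ∀ (t : List (Equiv.Perm (Fin n))) (π : Equiv.Perm (Fin n)) (b : Bool),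
    (ff n (π :: t) b).getLast? =
      some (EE ((π :: t).getLast (List.cons_ne_nil _ _)) *
        TT n (if ((t.length % 2 == 0) = b) then n else 0)) := by
  intro t
  induction t with
  | nil =>
    intro π b
    rw [ff, ff, List.append_nil, blockOf_getLast?]
    cases b <;> simp
  | cons π' t' ih =>
    intro π b
    rw [ff, List.getLast?_append_of_ne_nil _ (ff_ne_nil π' t' (!b)), ih π' (!b)]
    have hgl : (π' :: t').getLast (List.cons_ne_nil _ _) =
        (π :: π' :: t').getLast (List.cons_ne_nil _ _) :=
      (List.getLast_cons (List.cons_ne_nil _ _)).symm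
    rw [hgl]
    congr 2
    rcases Nat.mod_two_eq_zero_or_one t'.length with h | h <;>
      cases b <;> simp [List.length_cons, Nat.add_mod, h]

lemma junction {π π' : Equiv.Perm (Fin n)} (h : (permGraph n).Adj π π') (j : ℕ)
    (hj : j = 0 ∨ j = n) :
    (permGraph (n + 1)).Adj (EE π * TT n j) (EE π' * TT n j) := by
  have main : ∀ (σ : Equiv.Perm (Fin n)) (k : ℕ), k + 1 < n →
      (permGraph (n + 1)).Adj (EE σ * TT n j) (EE (σ * ss n k) * TT n j) := by
    intro σ k hk
    rw [EE_mul, EE_ss hk]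
    rcases hj with rfl | hjn
    · have h0 : TT n 0 = 1 := rfl
      rw [h0, mul_one, mul_one]
      exact permGraph_adj_mul (show k + 1 < n + 1 by omega) (EE σ)
    · rw [hjn, mul_assoc, ss_mul_TT hk, ← mul_assoc]
      exact permGraph_adj_mul (show (k + 1) + 1 < n + 1 by omega) (EE σ * TT n n)
  rw [permGraph, SimpleGraph.fromRel_adj] at h
  obtain ⟨hne, h' | h'⟩ := h
  · obtain ⟨k, hk, e⟩ := h'
    have : π' = π * ss n k := by rw [e, ss_def hk]
    rw [this]
    exact main π k hk
  · obtain ⟨k, hk, e⟩ := h'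
    have : π = π' * ss n k := by rw [e, ss_def hk]
    rw [this]
    exact ((permGraph (n + 1)).adj_symm (main π' k hk))

lemma ff_chain' : ∀ {L : List (Equiv.Perm (Fin n))} {b : Bool},
    L.Chain' (permGraph n).Adj → (ff n L b).Chain' (permGraph (n + 1)).Adj := by
  intro L
  induction L with
  | nil => intro b _; simp [ff, List.Chain']
  | cons π t ih =>
    intro b hch
    unfold List.Chain' at hch ⊢
    rw [ff, List.isChain_append]
    refine ⟨blockOf_chain' π b, ih hch.tail, ?_⟩
    intro x hx y hy
    rw [blockOf_getLast?, Option.mem_some_iff] at hx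
    subst hx
    cases t with
    | nil => simp [ff] at hy
    | cons π' t' =>
      rw [ff_head? π' t' (!b), Option.mem_some_iff] at hy
      subst hy
      have hidx : (if (!b) = true then 0 else n) = (if b = true then n else 0) := by
        cases b <;> simp
      rw [hidx]
      have hadj : (permGraph n).Adj π π' := (List.isChain_cons_cons.mp hch).1
      exact junction hadj _ (by cases b <;> simp)

theorem key : ∀ (n : ℕ), 2 ≤ n → ∃ L : List (Equiv.Perm (Fin n)),
    L.Nodup ∧ L.length = n.factorial ∧ L.Chain' (permGraph n).Adj ∧
    L.head? = some 1 ∧ L.getLast? = some (ss n 0) := by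
  intro n hn
  induction n, hn using Nat.le_induction with
  | base =>
    refine ⟨[1, ss 2 0], ?_, rfl, ?_, rfl, rfl⟩
    · refine List.nodup_cons.mpr ⟨?_, List.nodup_singleton _⟩
      simp only [List.mem_singleton]
      exact fun h => ss_ne_one (show 0 + 1 < 2 by norm_num) h.symm
    · rw [List.Chain', List.isChain_pair]
      have := permGraph_adj_mul (show 0 + 1 < 2 by norm_num) (1 : Equiv.Perm (Fin 2))
      rwa [one_mul] at this
  | succ n hn ih =>
    obtain ⟨L, hnd, hlen, hch, hhd, hlast⟩ := ih
    refine ⟨ff n L true, ff_nodup hnd, ?_, ff_chain' hch, ?_, ?_⟩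
    · rw [ff_length, hlen, Nat.factorial_succ, Nat.mul_comm]
    · cases L with
      | nil => simp at hhd
      | cons π t =>
        have hπ : π = 1 := by simpa using hhd
        subst hπ
        rw [ff_head?]
        simp [EE_one, show TT n 0 = 1 from rfl]
    · cases L with
      | nil => simp at hhd
      | cons π t =>
        rw [ff_getLast?]
        have hpar : ¬((t.length % 2 == 0) = true) := by
          have h2 : 2 ∣ Nat.factorial n := Nat.dvd_factorial (by norm_num) hn
          have hl : t.length + 1 = Nat.factorial n := by simpa using hlen
          simp only [beq_iff_eq]
          omega
        rw [if_neg hpar]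
        have hgl : (π :: t).getLast (List.cons_ne_nil _ _) = ss n 0 := by
          have h := List.getLast?_eq_getLast (l := π :: t) (List.cons_ne_nil _ _)
          rw [h] at hlast
          exact Option.some_injective _ hlast
        rw [hgl]
        have h0 : TT n 0 = 1 := rfl
        rw [h0, mul_one, EE_ss (show 0 + 1 < n by omega)]

lemma exists_walk {V : Type*} {G : SimpleGraph V} :
    ∀ (l : List V) (u v : V), List.Chain G.Adj u l →
      (u :: l).getLast (List.cons_ne_nil _ _) = v → ∃ w : G.Walk u v, w.support = u :: l := by
  intro l
  induction l with
  | nil =>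
    intro u v _ hlast
    simp only [List.getLast_singleton] at hlast
    subst hlast
    exact ⟨SimpleGraph.Walk.nil, rfl⟩
  | cons a t ih =>
    intro u v hc hlast
    unfold List.Chain at hc
    rw [List.chain_cons] at hc
    have hlast' : (a :: t).getLast (List.cons_ne_nil _ _) = v := by
      rwa [List.getLast_cons (List.cons_ne_nil _ _)] at hlast
    obtain ⟨w, hw⟩ := ih a v hc.2 hlast'
    exact ⟨SimpleGraph.Walk.cons hc.1 w, by rw [SimpleGraph.Walk.support_cons, hw]⟩

end SJT

lemma not_mem_edges {V : Type*} {G : SimpleGraph V} {u v : V} (w : G.Walk u v)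
    (hpath : w.IsPath) (hne : u ≠ v) (hlen : 3 ≤ w.support.length) :
    s(v, u) ∉ w.edges := by
  intro hmem
  cases w with
  | nil => exact hne rfl
  | @cons _ b _ hadj' q =>
    rw [SimpleGraph.Walk.edges_cons, List.mem_cons] at hmem
    have hq := (SimpleGraph.Walk.cons_isPath_iff _ _).mp hpath
    rcases hmem with hmem | hmem
    · rw [Sym2.eq_iff] at hmem
      rcases hmem with ⟨h1, h2⟩ | ⟨h1, h2⟩
      · exact hne h1.symm
      · subst h1
        cases q with
        | nil => simp [SimpleGraph.Walk.support_cons] at hlen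
        | cons h'' r =>
          have hq2 := (SimpleGraph.Walk.cons_isPath_iff _ _).mp hq.1
          exact hq2.2 (SimpleGraph.Walk.end_mem_support r)
    · exact hq.2 (SimpleGraph.Walk.snd_mem_support_of_mem_edges q hmem)

open SJT in
/-- The adjacent-transposition graph on permutations of `{1,…,n}` has a Hamiltonian
cycle for `n ≥ 3` and a Hamiltonian path for all `n ≥ 2`
(Steinhaus–Johnson–Trotter). -/
theorem permGraph_hamiltonian (n : ℕ) (hn : 2 ≤ n) :
    (3 ≤ n → ∃ (v : Equiv.Perm (Fin n)) (c : (permGraph n).Walk v v),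
      c.IsHamiltonianCycle) ∧
    (∃ (u v : Equiv.Perm (Fin n)) (p : (permGraph n).Walk u v),
      p.IsPath ∧ p.IsHamiltonian) := by
  obtain ⟨L, hnd, hlen, hch, hhd, hlast⟩ := key n hn
  have hall : ∀ π : Equiv.Perm (Fin n), π ∈ L := by
    have hcard : L.toFinset = Finset.univ := by
      apply Finset.eq_univ_of_card
      rw [List.toFinset_card_of_nodup hnd, hlen, Fintype.card_perm, Fintype.card_fin]
    intro π
    rw [← List.mem_toFinset, hcard]
    exact Finset.mem_univ _
  obtain ⟨t, rfl⟩ : ∃ t, L = 1 :: t := by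
    cases L with
    | nil => simp at hhd
    | cons π t => exact ⟨t, by rw [show π = 1 by simpa using hhd]⟩
  have hchain : List.Chain (permGraph n).Adj 1 t := hch
  have hgl : (1 :: t).getLast (List.cons_ne_nil _ _) = ss n 0 := by
    have h := List.getLast?_eq_getLast (l := 1 :: t) (List.cons_ne_nil _ _)
    rw [h] at hlast
    exact Option.some_injective _ hlast
  obtain ⟨w, hw⟩ := exists_walk t 1 (ss n 0) hchain hgl
  have hpath : w.IsPath := by rw [SimpleGraph.Walk.isPath_def, hw]; exact hnd
  have hham : w.IsHamiltonian := fun a => by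
    rw [hw]
    exact List.count_eq_one_of_mem hnd (hall a)
  refine ⟨?_, 1, ss n 0, w, hpath, hham⟩
  intro h3
  have h01 : 0 + 1 < n := by omega
  have hadj : (permGraph n).Adj (ss n 0) 1 := by
    have h := permGraph_adj_mul h01 (ss n 0)
    have hsq : ss n 0 * ss n 0 = 1 := by
      rw [ss_def h01]; exact Equiv.swap_mul_self _ _
    rwa [hsq] at h
  refine ⟨ss n 0, SimpleGraph.Walk.cons hadj w, ?_⟩
  rw [SimpleGraph.Walk.isHamiltonianCycle_iff_isCycle_and_support_count_tail_eq_one]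
  constructor
  · rw [SimpleGraph.Walk.cons_isCycle_iff]
    refine ⟨hpath, ?_⟩
    have hlen6 : 6 ≤ Nat.factorial n := by
      calc 6 = Nat.factorial 3 := rfl
      _ ≤ Nat.factorial n := Nat.factorial_le h3
    have hsupl : w.support.length = Nat.factorial n := by
      rw [hw]
      simpa using hlen
    exact not_mem_edges w hpath (fun h => ss_ne_one h01 h.symm) (by omega)
  · intro a
    rw [SimpleGraph.Walk.support_cons, List.tail_cons, hw]
    exact List.count_eq_one_of_mem hnd (hall a)
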